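/- Let A be a finite nonempty alphabet, σ a bijection on A, m ≥ 0 an integer, and v = (v(n))_{n≥1} a sequence in A. If the sequence T₁v (defined by (T₁v)(n) = v(2n+1)) has a finite 2-kernel, and (T₀v)(n+m) = σ(v(n)) for all integers n ≥ 1 (where (T₀v)(n) = v(2n)), then v has a finite 2-kernel, i.e. v is 2-automatic. -/

import Mathlib

/-- The operator taking a sequence `v` to the sequence `n ↦ v (2n)`. -/
def T0 {A : Type*} (v : ℕ → A) : ℕ → A := fun n => v (2 * n)

/-- The operator taking a sequence `v` to the sequence `n ↦ v (2n+1)`. -/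
def T1 {A : Type*} (v : ℕ → A) : ℕ → A := fun n => v (2 * n + 1)

/-- The 2-kernel of a sequence `v`. -/
def kernel2 {A : Type*} (v : ℕ → A) : Set (ℕ → A) :=
  {w | ∃ i j : ℕ, j < 2 ^ i ∧ w = fun n => v (2 ^ i * n + j)}

/-- Extension of a sequence to integer indices (garbage on negatives). -/
def vzAux {A : Type*} (v : ℕ → A) : ℤ → A := fun z => v z.toNat

theorem keyAux {A : Type*} (σ : Equiv.Perm A) (m : ℕ) (v : ℕ → A)
    (h1 : ∀ n : ℕ, 1 ≤ n → T0 v (n + m) = σ (v n)) (i : ℕ) :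
    ∀ j : ℤ, -(2 * (m : ℤ)) ≤ j → j < 2 ^ i →
      ∃ τ : Equiv.Perm A,
        (∃ g ∈ kernel2 (T1 v), ∃ q : ℕ, q ≤ 1 ∧
            ∀ n : ℕ, 1 ≤ n → vzAux v (2 ^ i * n + j) = τ (g (n - q))) ∨
        (∃ i' : ℕ, i' ≤ m + 1 ∧ ∃ j' : ℤ, -(2 * (m : ℤ)) ≤ j' ∧ j' < 2 ^ (m + 2) ∧
            ∀ n : ℕ, 1 ≤ n → vzAux v (2 ^ i * n + j) = τ (vzAux v (2 ^ i' * n + j'))) := by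
  induction i with
  | zero =>
      intro j hj1 hj2
      refine ⟨1, Or.inr ⟨0, by omega, j, hj1, ?_, fun n hn => by simp⟩⟩
      have h : (2 : ℤ) ^ 0 ≤ 2 ^ (m + 2) := pow_le_pow_right₀ (by norm_num) (by omega)
      simp at h hj2 ⊢
      linarith
  | succ i ih =>
      intro j hj1 hj2
      by_cases hi : i + 1 ≤ m + 1
      · refine ⟨1, Or.inr ⟨i + 1, hi, j, hj1, ?_, fun n hn => by simp⟩⟩
        have h : (2 : ℤ) ^ (i + 1) ≤ 2 ^ (m + 2) := pow_le_pow_right₀ (by norm_num) (by omega)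
        linarith
      · have hie : (2 : ℤ) * m + 2 ≤ 2 ^ i := by
          have h1m : (m : ℤ) + 1 ≤ 2 ^ m := by exact_mod_cast (Nat.lt_two_pow_self : m < 2 ^ m)
          have h2 : (2 : ℤ) ^ (m + 1) ≤ 2 ^ i := pow_le_pow_right₀ (by norm_num) (by omega)
          have h3 : (2 : ℤ) ^ (m + 1) = 2 * 2 ^ m := by ring
          linarith
        have hj2' : j < 2 * 2 ^ i := by
          have h : (2 : ℤ) ^ (i + 1) = 2 * 2 ^ i := by ring
          linarith
        rcases Int.even_or_odd j with ⟨c, hc⟩ | ⟨c, hc⟩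
        · -- even case : j = c + c
          have hcm : -(m : ℤ) ≤ c := by omega
          have hclt : c < 2 ^ i := by linarith
          have hkey : ∀ n : ℕ, 1 ≤ n →
              vzAux v (2 ^ (i + 1) * n + j) = σ (vzAux v (2 ^ i * n + (c - m))) := by
            intro n hn
            have hn' : (1 : ℤ) ≤ n := by exact_mod_cast hn
            have hmul : (2 : ℤ) ^ i * 1 ≤ 2 ^ i * n :=
              mul_le_mul_of_nonneg_left hn' (by positivity)
            set N : ℤ := 2 ^ i * n + c with hN
            have hNge : (m : ℤ) + 2 ≤ N := by rw [hN]; linarith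
            have h1' := h1 (N - m).toNat (by omega)
            have harg : 2 ^ (i + 1) * (n : ℤ) + j = 2 * N := by rw [hc, hN]; ring
            have htn : (2 * N).toNat = 2 * ((N - m).toNat + m) := by omega
            have hL : vzAux v (2 ^ (i + 1) * n + j) = T0 v ((N - m).toNat + m) := by
              rw [harg]
              show v (2 * N).toNat = v (2 * ((N - m).toNat + m))
              rw [htn]
            rw [hL, h1']
            exact congrArg σ (congrArg (vzAux v)
              (show N - (m : ℤ) = 2 ^ i * n + (c - m) by rw [hN]; ring)).symm ▸ rfl
          obtain ⟨τ', hτ'⟩ := ih (c - m) (by linarith) (by linarith)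
          refine ⟨σ * τ', ?_⟩
          rcases hτ' with ⟨g, hg, q, hq, hEq⟩ | ⟨i', hii, j', hj'1, hj'2, hEq⟩
          · exact Or.inl ⟨g, hg, q, hq, fun n hn => by rw [hkey n hn, hEq n hn]; rfl⟩
          · exact Or.inr ⟨i', hii, j', hj'1, hj'2, fun n hn => by
              rw [hkey n hn, hEq n hn]; rfl⟩
        · -- odd case : j = 2*c + 1
          have hcm : -(m : ℤ) ≤ c := by omega
          have hclt : c < 2 ^ i := by linarith
          by_cases hc0 : 0 ≤ c
          · refine ⟨1, Or.inl ⟨fun n => T1 v (2 ^ i * n + c.toNat),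
              ⟨i, c.toNat, ?_, rfl⟩, 0, by omega, ?_⟩⟩
            · have h : (c.toNat : ℤ) < 2 ^ i := by rwa [Int.toNat_of_nonneg hc0]
              exact_mod_cast h
            · intro n hn
              simp only [Nat.sub_zero, Equiv.Perm.one_apply]
              show v _ = v _
              congr 1
              have h : 2 ^ (i + 1) * (n : ℤ) + j =
                  ((2 * (2 ^ i * n + c.toNat) + 1 : ℕ) : ℤ) := by
                push_cast [Int.toNat_of_nonneg hc0]
                rw [hc]; ring
              rw [h, Int.toNat_natCast]
          · push_neg at hc0
            have hd0 : (0 : ℤ) ≤ 2 ^ i + c := by linarith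
            refine ⟨1, Or.inl ⟨fun n => T1 v (2 ^ i * n + ((2 : ℤ) ^ i + c).toNat),
              ⟨i, ((2 : ℤ) ^ i + c).toNat, ?_, rfl⟩, 1, le_refl 1, ?_⟩⟩
            · have h : ((((2 : ℤ) ^ i + c).toNat : ℤ)) < 2 ^ i := by
                rw [Int.toNat_of_nonneg hd0]; linarith
              exact_mod_cast h
            · intro n hn
              obtain ⟨k, rfl⟩ : ∃ k, n = k + 1 := ⟨n - 1, by omega⟩
              simp only [Equiv.Perm.one_apply, Nat.add_sub_cancel]
              show v _ = v _
              congr 1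
              have h : 2 ^ (i + 1) * ((k + 1 : ℕ) : ℤ) + j =
                  ((2 * (2 ^ i * k + ((2 : ℤ) ^ i + c).toNat) + 1 : ℕ) : ℤ) := by
                push_cast [Int.toNat_of_nonneg hd0]
                rw [hc]; ring
              rw [h, Int.toNat_natCast]

theorem stmt1 {A : Type*} [Finite A] [Nonempty A] (σ : Equiv.Perm A) (m : ℕ)
    (v : ℕ → A) (h0 : (kernel2 (T1 v)).Finite)
    (h1 : ∀ n : ℕ, 1 ≤ n → T0 v (n + m) = σ (v n)) :
    (kernel2 v).Finite := by
  classical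
  haveI := h0.to_subtype
  have main := keyAux σ m v h1
  set F1 : Set (ℕ → A) := Set.range (fun p : Equiv.Perm A × ↥(kernel2 (T1 v)) × Fin 2 × A =>
    fun n => if n = 0 then p.2.2.2 else p.1 ((p.2.1 : ℕ → A) (n - (p.2.2.1 : ℕ)))) with hF1def
  set F2 : Set (ℕ → A) := Set.range
    (fun p : Equiv.Perm A × Fin (m + 2) × ↥(Finset.Icc (-(2 * (m : ℤ))) (2 ^ (m + 2))) × A =>
    fun n => if n = 0 then p.2.2.2
      else p.1 (vzAux v (2 ^ ((p.2.1 : Fin (m + 2)) : ℕ) * n + ((p.2.2.1 : ℤ))))) with hF2def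
  have hsub : kernel2 v ⊆ F1 ∪ F2 := by
    rintro w ⟨i, j, hj, rfl⟩
    have hj1 : -(2 * (m : ℤ)) ≤ (j : ℤ) := by omega
    have hj2 : (j : ℤ) < 2 ^ i := by exact_mod_cast hj
    obtain ⟨τ, hcase⟩ := main i j hj1 hj2
    have hvz : ∀ n : ℕ, v (2 ^ i * n + j) = vzAux v (2 ^ i * (n : ℤ) + j) := by
      intro n
      show v _ = v _
      congr 1
    rcases hcase with ⟨g, hg, q, hq, hEq⟩ | ⟨i', hii, j', hj'1, hj'2, hEq⟩
    · left
      refine ⟨⟨τ, ⟨g, hg⟩, ⟨q, by omega⟩, v (2 ^ i * 0 + j)⟩, ?_⟩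
      funext n
      by_cases hn : n = 0
      · subst hn; simp
      · simp only [if_neg hn]
        show τ (g (n - q)) = v (2 ^ i * n + j)
        rw [hvz n]
        exact (hEq n (by omega)).symm
    · right
      refine ⟨⟨τ, ⟨i', by omega⟩,
        ⟨j', by simp only [Finset.mem_Icc]; exact ⟨hj'1, le_of_lt hj'2⟩⟩,
        v (2 ^ i * 0 + j)⟩, ?_⟩
      funext n
      by_cases hn : n = 0
      · subst hn; simp
      · simp only [if_neg hn]
        show τ (vzAux v (2 ^ i' * n + j')) = v (2 ^ i * n + j)
        rw [hvz n]
        exact (hEq n (by omega)).symm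
  exact ((Set.finite_range _).union (Set.finite_range _)).subset hsub
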